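/- (Theorem 3.1, uniform marginal of the distinguished customer) If λ/μ < 1 and λe^{φ}/μ < 1, then for every j ∈ Λ the family (π(j,n)) indexed by n : Λ → ℕ is summable with Σ_{n : Λ → ℕ} π(j,n) = 1/#Λ; in particular, in equilibrium the position of the distinguished customer is uniformly distributed on Λ. -/

import Mathlib

set_option maxHeartbeats 1000000 in
/-- Geometric sum over `Fin m → ℕ` factorizes. -/
lemma hasSum_pi_fin : ∀ (m : ℕ) (a : Fin m → ℝ), (∀ i, 0 ≤ a i) → (∀ i, a i < 1) →
    HasSum (fun n : Fin m → ℕ => ∏ i, a i ^ n i) (∏ i, (1 - a i)⁻¹) := by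
  intro m
  induction m with
  | zero =>
    intro a _ _
    simpa using hasSum_unique (fun n : Fin 0 → ℕ => ∏ i, a i ^ n i)
  | succ m ih =>
    intro a h0 h1
    have hgeo : HasSum (fun k : ℕ => a 0 ^ k) (1 - a 0)⁻¹ :=
      hasSum_geometric_of_lt_one (h0 0) (h1 0)
    have hrest := ih (fun i => a i.succ) (fun i => h0 _) (fun i => h1 _)
    have hsum : Summable (fun p : ℕ × (Fin m → ℕ) =>
        (a 0 ^ p.1) * ∏ i : Fin m, a i.succ ^ p.2 i) := by
      apply Summable.mul_of_nonneg hgeo.summable hrest.summable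
      · exact Pi.le_def.mpr fun k => pow_nonneg (h0 0) k
      · exact Pi.le_def.mpr fun n => Finset.prod_nonneg fun i _ => pow_nonneg (h0 _) _
    have hprod : HasSum (fun p : ℕ × (Fin m → ℕ) =>
        (a 0 ^ p.1) * ∏ i : Fin m, a i.succ ^ p.2 i)
        ((1 - a 0)⁻¹ * ∏ i : Fin m, (1 - a i.succ)⁻¹) := by
      apply HasSum.mul hgeo hrest hsum
    have hfe : (fun n : Fin (m+1) → ℕ => ∏ i, a i ^ n i) ∘ (Fin.consEquiv (fun _ : Fin (m+1) => ℕ))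
        = fun p : ℕ × (Fin m → ℕ) => (a 0 ^ p.1) * ∏ i : Fin m, a i.succ ^ p.2 i := by
      funext p
      simp [Fin.consEquiv, Fin.prod_univ_succ]
    rw [Fin.prod_univ_succ]
    exact ((Fin.consEquiv (fun _ : Fin (m+1) => ℕ)).hasSum_iff).mp (by rw [hfe]; exact hprod)

/-- Geometric sum over `ι → ℕ` factorizes, for any fintype `ι`. -/
lemma hasSum_pi_geom {ι : Type*} [Fintype ι] (a : ι → ℝ) (h0 : ∀ i, 0 ≤ a i)
    (h1 : ∀ i, a i < 1) :
    HasSum (fun n : ι → ℕ => ∏ i, a i ^ n i) (∏ i, (1 - a i)⁻¹) := by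
  classical
  set m := Fintype.card ι
  have e : ι ≃ Fin m := Fintype.equivFin ι
  have hfin := hasSum_pi_fin m (a ∘ e.symm) (fun i => h0 _) (fun i => h1 _)
  let E : (ι → ℕ) ≃ (Fin m → ℕ) := Equiv.arrowCongr e (Equiv.refl ℕ)
  have hfe : (fun n : Fin m → ℕ => ∏ i, (a ∘ e.symm) i ^ n i) ∘ E
      = fun n : ι → ℕ => ∏ i, a i ^ n i := by
    funext n
    simp only [Function.comp_apply, E, Equiv.arrowCongr_apply, Equiv.coe_refl,
      Function.comp, id_eq]
    exact Fintype.prod_equiv e.symm _ _ (fun i => by simp)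
  have hval : (∏ i, (1 - (a ∘ e.symm) i)⁻¹) = ∏ i, (1 - a i)⁻¹ :=
    Fintype.prod_equiv e.symm _ _ (fun i => rfl)
  have := (E.hasSum_iff (f := fun n : Fin m → ℕ => ∏ i, (a ∘ e.symm) i ^ n i)).mpr hfin
  rw [hfe, hval] at this
  exact this

/-- Theorem 3.1, uniform marginal of the distinguished customer:
under sub-criticality, for each `j` the sum over all configurations `n` of
`π(j,n)` equals `1/#Λ`; the position of the distinguished customer is uniform. -/
theorem rw_jackson_uniform_marginal
    (Λ : Type*) [Fintype Λ] [Nonempty Λ]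
    (lam mu φ : ℝ) (hlam : 0 < lam) (hmu : 0 < mu)
    (hsub1 : lam / mu < 1) (hsub2 : lam * Real.exp φ / mu < 1)
    (π : Λ → (Λ → ℕ) → ℝ)
    (hπ : ∀ (j : Λ) (n : Λ → ℕ), π j n =
      (Fintype.card Λ : ℝ)⁻¹ * (1 - lam * Real.exp φ / mu) *
        (1 - lam / mu) ^ (Fintype.card Λ - 1) *
        (lam / mu) ^ (∑ i, n i) * Real.exp (φ * n j)) :
    ∀ j : Λ, Summable (fun n : Λ → ℕ => π j n) ∧
      ∑' n : Λ → ℕ, π j n = 1 / (Fintype.card Λ : ℝ) := by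
  classical
  intro j
  set r : ℝ := lam / mu with hr
  set re : ℝ := lam * Real.exp φ / mu with hre
  have hr0 : 0 ≤ r := le_of_lt (div_pos hlam hmu)
  have hre0 : 0 ≤ re := le_of_lt (div_pos (mul_pos hlam (Real.exp_pos φ)) hmu)
  set a : Λ → ℝ := fun i => if i = j then re else r with ha
  have ha0 : ∀ i, 0 ≤ a i := fun i => by by_cases h : i = j <;> simp [ha, h, hr0, hre0]
  have ha1 : ∀ i, a i < 1 := fun i => by by_cases h : i = j <;> simp [ha, h, hsub1, hsub2]
  have hπa : ∀ n : Λ → ℕ, π j n =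
      ((Fintype.card Λ : ℝ)⁻¹ * (1 - re) * (1 - r) ^ (Fintype.card Λ - 1)) *
        ∏ i, a i ^ n i := by
    intro n
    have hprod : ∏ i, a i ^ n i = r ^ (∑ i, n i) * Real.exp (φ * n j) := by
      have : ∀ i ∈ Finset.univ, a i ^ n i = r ^ n i * (if i = j then Real.exp φ ^ n i else 1) := by
        intro i _
        by_cases h : i = j
        · have hre' : re = r * Real.exp φ := by rw [hre, hr, mul_div_right_comm]
          simp [ha, h, hre', mul_pow]
        · simp [ha, h]
      rw [Finset.prod_congr rfl this, Finset.prod_mul_distrib, Finset.prod_pow_eq_pow_sum]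
      congr 1
      · rw [Finset.prod_ite_eq' Finset.univ j (fun i => Real.exp φ ^ n i)]
        simp [← Real.exp_nat_mul, mul_comm]
    rw [hπ, hprod]; ring
  have hs := hasSum_pi_geom a ha0 ha1
  have hS := hs.mul_left ((Fintype.card Λ : ℝ)⁻¹ * (1 - re) * (1 - r) ^ (Fintype.card Λ - 1))
  have hπS : HasSum (fun n : Λ → ℕ => π j n)
      (((Fintype.card Λ : ℝ)⁻¹ * (1 - re) * (1 - r) ^ (Fintype.card Λ - 1)) *
        ∏ i, (1 - a i)⁻¹) := by
    exact hS.congr_fun fun n => hπa n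
  have hval : (((Fintype.card Λ : ℝ)⁻¹ * (1 - re) * (1 - r) ^ (Fintype.card Λ - 1)) *
      ∏ i, (1 - a i)⁻¹) = 1 / (Fintype.card Λ : ℝ) := by
    have hjmem : j ∈ Finset.univ := Finset.mem_univ j
    have : ∏ i, (1 - a i)⁻¹ = (1 - re)⁻¹ * ((1 - r)⁻¹) ^ (Fintype.card Λ - 1) := by
      rw [← Finset.mul_prod_erase Finset.univ _ hjmem]
      congr 1
      · simp [ha]
      · rw [Finset.prod_congr rfl (fun i hi => ?_), Finset.prod_const,
          Finset.card_erase_of_mem hjmem, Finset.card_univ]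
        simp [ha, Finset.ne_of_mem_erase hi]
    rw [this]
    have hre1 : (1 : ℝ) - re ≠ 0 := by linarith
    have hr1 : (1 : ℝ) - r ≠ 0 := by linarith
    field_simp
    ring_nf
    rw [← mul_pow, inv_mul_cancel₀ hr1, one_pow]
  exact ⟨hπS.summable, hπS.tsum_eq.trans hval⟩
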